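/- With x_n and x'_n as above, for every even n = 2k one has inf_m d(x_n, x'_m) ≤ log 2, while for every odd n = 2k−1 one has inf_m d(x_n, x'_m) = log(k+1); in particular the distance from x_{2k−1} to the set {x'_m : m ∈ ℕ} tends to infinity as k → ∞. -/
import Mathlib


noncomputable section
noncomputable section

/-- `x_n = (log 2, log 3, …, log (n+1), 0, 0, …)`: entry `log (k+1)` in positions
`k = 1, …, n` and `0` elsewhere. -/
def xseq (n : ℕ) : ℕ → ℝ := fun k => if 1 ≤ k ∧ k ≤ n then Real.log (k + 1) else 0

/-- `x'_n = (log 2, log 2, log 3, log 3, …, log (n+1), log (n+1), 0, …)`: each entry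
`log k`, `2 ≤ k ≤ n+1`, repeated twice, occupying positions `1, …, 2n`. -/
def xseq' (n : ℕ) : ℕ → ℝ :=
  fun k => if 1 ≤ k ∧ k ≤ 2 * n then Real.log (((k + 1) / 2 + 1 : ℕ) : ℝ) else 0

/-- The sup-metric of `ℓ^∞(ℕ)`. -/
def dsup (x y : ℕ → ℝ) : ℝ := ⨆ k : ℕ, |x k - y k|

lemma dsup_nonneg (x y : ℕ → ℝ) : 0 ≤ dsup x y :=
  Real.iSup_nonneg fun _ => abs_nonneg _

lemma xseq_nonneg (n j : ℕ) : 0 ≤ xseq n j := by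
  unfold xseq
  split
  · exact Real.log_nonneg (by push_cast; linarith [Nat.cast_nonneg (α := ℝ) j])
  · exact le_refl 0

lemma xseq_le (n j : ℕ) : xseq n j ≤ Real.log (n + 1) := by
  unfold xseq
  split
  · rename_i h
    apply Real.log_le_log (by positivity)
    have : (j : ℝ) ≤ (n : ℝ) := Nat.cast_le.2 h.2
    linarith
  · exact Real.log_nonneg (by push_cast; linarith [Nat.cast_nonneg (α := ℝ) n])

lemma xseq'_nonneg (m j : ℕ) : 0 ≤ xseq' m j := by
  unfold xseq'
  split
  · exact Real.log_nonneg (by exact_mod_cast (by omega : 1 ≤ (j + 1) / 2 + 1))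
  · exact le_refl 0

lemma xseq'_le (m j : ℕ) : xseq' m j ≤ Real.log (m + 1) := by
  unfold xseq'
  split
  · rename_i h
    have : ((((j + 1) / 2 + 1 : ℕ)) : ℝ) ≤ ((m + 1 : ℕ) : ℝ) :=
      Nat.cast_le.2 (by omega)
    refine le_trans (Real.log_le_log (by positivity) this) ?_
    push_cast
    exact le_refl _
  · exact Real.log_nonneg (by push_cast; linarith [Nat.cast_nonneg (α := ℝ) m])

lemma dsup_bdd (n m : ℕ) :
    BddAbove (Set.range fun j => |xseq n j - xseq' m j|) := by
  refine ⟨Real.log (n + 1) + Real.log (m + 1), ?_⟩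
  rintro _ ⟨j, rfl⟩
  have h1 := xseq_nonneg n j
  have h2 := xseq_le n j
  have h3 := xseq'_nonneg m j
  have h4 := xseq'_le m j
  rw [abs_sub_le_iff]
  constructor <;> linarith

lemma dsup_bddBelow (n : ℕ) :
    BddBelow (Set.range fun m => dsup (xseq n) (xseq' m)) := by
  refine ⟨0, ?_⟩
  rintro _ ⟨m, rfl⟩
  exact dsup_nonneg _ _

/-- key pointwise estimate on the common support -/
lemma boundA (j : ℕ) (hj : 1 ≤ j) :
    |Real.log (j + 1) - Real.log (((j + 1) / 2 + 1 : ℕ) : ℝ)| ≤ Real.log 2 := by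
  set a : ℕ := (j + 1) / 2 + 1 with ha
  have h1 : a ≤ j + 1 := by omega
  have h2 : j + 1 ≤ 2 * a := by omega
  have ha1 : (1 : ℝ) ≤ (a : ℝ) := by exact_mod_cast (by omega : 1 ≤ a)
  have hle : (a : ℝ) ≤ (j : ℝ) + 1 := by exact_mod_cast h1
  have hle2 : (j : ℝ) + 1 ≤ 2 * (a : ℝ) := by exact_mod_cast h2
  have hlog1 : Real.log a ≤ Real.log (j + 1) := Real.log_le_log (by linarith) hle
  have hlog2 : Real.log ((j : ℝ) + 1) ≤ Real.log (2 * a) :=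
    Real.log_le_log (by linarith) hle2
  rw [Real.log_mul (by norm_num) (by linarith)] at hlog2
  rw [abs_of_nonneg (by linarith)]
  linarith

/-- entrywise bound for the even case `n = 2k`. -/
lemma entry_le_even (k j : ℕ) :
    |xseq (2 * k) j - xseq' k j| ≤ Real.log 2 := by
  unfold xseq xseq'
  by_cases h1 : 1 ≤ j ∧ j ≤ 2 * k
  · rw [if_pos h1, if_pos h1]
    exact boundA j h1.1
  · rw [if_neg h1, if_neg h1, sub_zero, abs_zero]
    exact Real.log_nonneg (by norm_num)

/-- entrywise bound for the odd case: `dsup (x_{2k-1}) (x'_k) ≤ log (k+1)`. -/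
lemma entry_le_odd (k j : ℕ) (hk : 1 ≤ k) :
    |xseq (2 * k - 1) j - xseq' k j| ≤ Real.log ((k : ℝ) + 1) := by
  have hlogk : Real.log 2 ≤ Real.log ((k : ℝ) + 1) := by
    apply Real.log_le_log (by norm_num)
    have : (1 : ℝ) ≤ (k : ℝ) := by exact_mod_cast hk
    linarith
  unfold xseq xseq'
  by_cases h1 : 1 ≤ j ∧ j ≤ 2 * k - 1
  · rw [if_pos h1, if_pos ⟨h1.1, by omega⟩]
    exact (boundA j h1.1).trans hlogk
  · rw [if_neg h1]
    by_cases h2 : 1 ≤ j ∧ j ≤ 2 * k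
    · rw [if_pos h2]
      have hj : j = 2 * k := by omega
      have hk1 : (j + 1) / 2 + 1 = k + 1 := by omega
      rw [zero_sub, abs_neg, hk1]
      rw [abs_of_nonneg (Real.log_nonneg (by exact_mod_cast (by omega : 1 ≤ k + 1)))]
      push_cast
      exact le_refl _
    · rw [if_neg h2, sub_zero, abs_zero]
      exact Real.log_nonneg (by push_cast; linarith [Nat.cast_nonneg (α := ℝ) k])

/-- lower bound: for every `m`, `log (k+1) ≤ dsup (x_{2k-1}) (x'_m)`. -/
lemma odd_lower (k m : ℕ) (hk : 1 ≤ k) :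
    Real.log ((k : ℝ) + 1) ≤ dsup (xseq (2 * k - 1)) (xseq' m) := by
  unfold dsup
  by_cases hm : m < k
  · -- witness position j = 2k - 1
    refine le_trans ?_ (le_ciSup (dsup_bdd _ _) (2 * k - 1))
    have hx : xseq (2 * k - 1) (2 * k - 1) = Real.log ((2 * k - 1 : ℕ) + 1) := by
      unfold xseq; rw [if_pos ⟨by omega, le_refl _⟩]
    have hx' : xseq' m (2 * k - 1) = 0 := by
      unfold xseq'; rw [if_neg (by omega)]
    rw [hx, hx', sub_zero]
    have hcast : ((2 * k - 1 : ℕ) : ℝ) + 1 = 2 * (k : ℝ) := by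
      have : (2 * k - 1 : ℕ) + 1 = 2 * k := by omega
      exact_mod_cast congrArg (Nat.cast (R := ℝ)) this
    rw [hcast]
    have h1 : (1 : ℝ) ≤ (k : ℝ) := by exact_mod_cast hk
    have : Real.log ((k : ℝ) + 1) ≤ Real.log (2 * k) :=
      Real.log_le_log (by linarith) (by linarith)
    rw [abs_of_nonneg (Real.log_nonneg (by linarith))]
    exact this
  · -- witness position j = 2k
    refine le_trans ?_ (le_ciSup (dsup_bdd _ _) (2 * k))
    have hx : xseq (2 * k - 1) (2 * k) = 0 := by
      unfold xseq; rw [if_neg (by omega)]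
    have hx' : xseq' m (2 * k) = Real.log (((2 * k + 1) / 2 + 1 : ℕ) : ℝ) := by
      unfold xseq'; rw [if_pos ⟨by omega, by omega⟩]
    have hk1 : (2 * k + 1) / 2 + 1 = k + 1 := by omega
    rw [hx, hx', hk1, zero_sub, abs_neg]
    rw [abs_of_nonneg (Real.log_nonneg (by exact_mod_cast (by omega : 1 ≤ k + 1)))]
    push_cast
    exact le_refl _

/-- for even `n = 2k` the distance from `x_n` to `{x'_m}` is at most
`log 2`, while for odd `n = 2k - 1` it equals `log (k+1)`; in particular the distance
from `x_{2k-1}` to `{x'_m : m ∈ ℕ}` tends to infinity as `k → ∞`. -/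
theorem stmt5 :
    (∀ k : ℕ, 1 ≤ k → (⨅ m : ℕ, dsup (xseq (2 * k)) (xseq' m)) ≤ Real.log 2) ∧
    (∀ k : ℕ, 1 ≤ k →
      (⨅ m : ℕ, dsup (xseq (2 * k - 1)) (xseq' m)) = Real.log (k + 1)) ∧
    Filter.Tendsto (fun k : ℕ => ⨅ m : ℕ, dsup (xseq (2 * k - 1)) (xseq' m))
      Filter.atTop Filter.atTop := by
  have hodd : ∀ k : ℕ, 1 ≤ k →
      (⨅ m : ℕ, dsup (xseq (2 * k - 1)) (xseq' m)) = Real.log (k + 1) := by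
    intro k hk
    apply le_antisymm
    · refine le_trans (ciInf_le (dsup_bddBelow _) k) ?_
      exact ciSup_le fun j => entry_le_odd k j hk
    · exact le_ciInf fun m => odd_lower k m hk
  refine ⟨?_, hodd, ?_⟩
  · intro k hk
    refine le_trans (ciInf_le (dsup_bddBelow _) k) ?_
    exact ciSup_le fun j => entry_le_even k j
  · have heq : (fun k : ℕ => ⨅ m : ℕ, dsup (xseq (2 * k - 1)) (xseq' m)) =ᶠ[Filter.atTop]
        fun k : ℕ => Real.log ((k : ℝ) + 1) := by
      filter_upwards [Filter.eventually_ge_atTop 1] with k hk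
      exact hodd k hk
    refine Filter.Tendsto.congr' heq.symm ?_
    have h1 : Filter.Tendsto (fun k : ℕ => ((k : ℝ) + 1)) Filter.atTop Filter.atTop :=
      Filter.tendsto_atTop_add_const_right _ 1 tendsto_natCast_atTop_atTop
    exact Real.tendsto_log_atTop.comp h1

end
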